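/- Let 0 < p ≤ 1 ≤ s < ∞ with p < s, λ > n(s/p - 1), and let M satisfy the molecule conditions (M1), (M2) with respect to B = B(0, r). Let γ ∈ (n(1/p - 1), λ/s - n/s') and N the integer with N < γ ≤ N + 1. Then for all ξ ∈ R^n, |M̂(ξ)| ≤ C ( |ξ|^γ r^{γ - n(1/p - 1)} + Σ_{|α| ≤ N} |ξ|^{|α|} |∫ M(x) x^α dx| ), with C depending only on n, p, s, λ, γ. -/

import Mathlib

open MeasureTheory Metric ENNReal FourierTransform

section AuxLemmas

open Finset Complex Real

lemma aux_taylor (N : ℕ) (γ : ℝ) (hγ0 : 0 < γ) (hN1 : (N:ℝ) < γ) (hN2 : γ ≤ (N:ℝ) + 1) (θ : ℝ) :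
    ‖Complex.exp (θ * Complex.I) - ∑ k ∈ Finset.range (N+1), (θ*Complex.I)^k / k.factorial‖
      ≤ (N+2) * |θ| ^ γ := by
  rcases eq_or_ne θ 0 with rfl | hθ
  · simp [Real.zero_rpow hγ0.ne', Finset.sum_range_succ']
  have habs : ‖(θ:ℂ) * Complex.I‖ = |θ| := by
    simp
  have hpos : (0:ℝ) < |θ| := abs_pos.mpr hθ
  rcases le_total |θ| 1 with h1 | h1
  · have hb := Complex.exp_bound (x := (θ:ℂ) * Complex.I) (by rw [habs]; exact h1)
      (n := N+1) (Nat.succ_pos N)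
    refine hb.trans ?_
    rw [habs]
    have h2 : |θ| ^ (N+1) ≤ |θ| ^ γ := by
      rw [← Real.rpow_natCast |θ| (N+1)]
      apply Real.rpow_le_rpow_of_exponent_ge hpos h1
      push_cast; linarith
    have h3 : ((N+1+1 : ℕ) : ℝ) * (((N+1).factorial * (N+1) : ℕ) : ℝ)⁻¹ ≤ (N+2 : ℝ) := by
      have : (1:ℝ) ≤ (((N+1).factorial * (N+1) : ℕ) : ℝ) := by
        exact_mod_cast Nat.one_le_iff_ne_zero.2 (by positivity)
      calc ((N+1+1 : ℕ) : ℝ) * (((N+1).factorial * (N+1) : ℕ) : ℝ)⁻¹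
          ≤ ((N+1+1 : ℕ) : ℝ) * 1 := by
            apply mul_le_mul_of_nonneg_left _ (by positivity)
            exact inv_le_one_of_one_le₀ this
        _ = (N+2 : ℝ) := by push_cast; ring
    calc |θ| ^ (N+1) * (((N + 1).succ : ℝ) * (((N+1).factorial : ℝ) * ((N+1:ℕ) : ℝ))⁻¹)
        = |θ| ^ (N+1) * (((N+1+1 : ℕ):ℝ) * (((N+1).factorial * (N+1) : ℕ) : ℝ)⁻¹) := by
          push_cast; ring_nf
      _ ≤ |θ| ^ γ * (N+2 : ℝ) := by
          apply mul_le_mul h2 h3 (by positivity) (Real.rpow_nonneg (abs_nonneg θ) γ)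
      _ = (N+2) * |θ| ^ γ := by ring
  · have hexp : ‖Complex.exp (θ * Complex.I)‖ = 1 := by
      rw [Complex.norm_exp]
      simp
    have hterm : ∀ k ∈ Finset.range (N+1), ‖(θ*Complex.I)^k / (k.factorial : ℂ)‖ ≤ |θ| ^ γ := by
      intro k hk
      rw [norm_div, norm_pow]
      have h4 : ‖(θ:ℂ) * Complex.I‖ = |θ| := habs
      rw [h4]
      have h5 : ‖((k.factorial : ℕ) : ℂ)‖ = (k.factorial : ℝ) := by
        simp
      rw [h5]
      have : |θ| ^ k ≤ |θ| ^ γ := by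
        rw [← Real.rpow_natCast |θ| k]
        apply Real.rpow_le_rpow_of_exponent_le h1
        have : k ≤ N := Nat.lt_succ_iff.mp (Finset.mem_range.mp hk)
        calc (k:ℝ) ≤ N := by exact_mod_cast this
          _ ≤ γ := hN1.le
      calc |θ| ^ k / (k.factorial : ℝ) ≤ |θ| ^ k / 1 := by
            apply div_le_div_of_nonneg_left (by positivity) one_pos
            exact_mod_cast Nat.one_le_iff_ne_zero.2 k.factorial_ne_zero
        _ = |θ| ^ k := div_one _
        _ ≤ |θ| ^ γ := this
    have h1γ : (1:ℝ) ≤ |θ| ^ γ := Real.one_le_rpow h1 hγ0.le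
    calc ‖Complex.exp (θ * Complex.I) - ∑ k ∈ Finset.range (N+1), (θ*Complex.I)^k / k.factorial‖
        ≤ ‖Complex.exp (θ * Complex.I)‖ + ‖∑ k ∈ Finset.range (N+1), (θ*Complex.I)^k / (k.factorial:ℂ)‖ := norm_sub_le _ _
      _ ≤ 1 + ∑ k ∈ Finset.range (N+1), ‖(θ*Complex.I)^k / (k.factorial:ℂ)‖ := by
          rw [hexp]; gcongr; exact norm_sum_le _ _
      _ ≤ 1 + ∑ k ∈ Finset.range (N+1), |θ| ^ γ := by
          gcongr with k hk; exact hterm k hk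
      _ = 1 + (N+1) * |θ| ^ γ := by rw [Finset.sum_const, Finset.card_range]; push_cast; ring
      _ ≤ (N+2) * |θ| ^ γ := by nlinarith [h1γ]


lemma aux_tail (n : ℕ) (b : ℝ) (hb : (n:ℝ) < b) :
    ∃ c : ℝ, 0 < c ∧ ∀ r : ℝ, 0 < r →
      ∫⁻ x in (ball (0 : EuclideanSpace ℝ (Fin n)) r)ᶜ, ENNReal.ofReal (‖x‖ ^ (-b))
        ≤ ENNReal.ofReal (c * r ^ ((n:ℝ) - b)) := by
  set E := EuclideanSpace ℝ (Fin n)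
  set V₁ : ℝ≥0∞ := volume (ball (0:E) 1) with hV₁
  have hV₁fin : V₁ ≠ ∞ := measure_ball_lt_top.ne
  set q : ℝ := (2:ℝ) ^ ((n:ℝ) - b) with hq
  have hq0 : 0 < q := Real.rpow_pos_of_pos two_pos _
  have hq1 : q < 1 := Real.rpow_lt_one_of_one_lt_of_neg one_lt_two (by linarith)
  have hq1' : (0:ℝ) < 1 - q := by linarith
  refine ⟨2^n * (1-q)⁻¹ * V₁.toReal + 1, by positivity, fun r hr => ?_⟩
  set S : ℕ → Set E := fun j => ball (0:E) (2^(j+1) * r) \ ball 0 (2^j * r) with hS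
  have hcover : (ball (0:E) r)ᶜ ⊆ ⋃ j : ℕ, S j := by
    intro x hx
    have hxr : r ≤ ‖x‖ := by
      simpa [Set.mem_compl_iff, mem_ball, dist_zero_right, not_lt] using hx
    have hxpos : 0 < ‖x‖ := lt_of_lt_of_le hr hxr
    set t : ℝ := ‖x‖ / r with ht
    have ht1 : 1 ≤ t := (one_le_div hr).mpr hxr
    have htpos : 0 < t := lt_of_lt_of_le one_pos ht1
    set j : ℕ := ⌊Real.logb 2 t⌋₊ with hj
    have hlogb0 : 0 ≤ Real.logb 2 t := Real.logb_nonneg one_lt_two ht1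
    have h2logb : (2:ℝ) ^ Real.logb 2 t = t := Real.rpow_logb two_pos (by norm_num) htpos
    have hlb : (2:ℝ)^j ≤ t := by
      rw [← Real.rpow_natCast 2 j, ← h2logb]
      exact Real.rpow_le_rpow_of_exponent_le one_le_two (Nat.floor_le hlogb0)
    have hub : t < (2:ℝ)^(j+1) := by
      rw [← Real.rpow_natCast 2 (j+1), ← h2logb]
      apply Real.rpow_lt_rpow_of_exponent_lt one_lt_two
      push_cast
      exact Nat.lt_floor_add_one _
    refine Set.mem_iUnion.mpr ⟨j, ?_⟩
    simp only [hS, Set.mem_diff, mem_ball, dist_zero_right, not_lt]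
    constructor
    · calc ‖x‖ = t * r := by rw [ht]; field_simp
        _ < 2^(j+1) * r := by exact mul_lt_mul_of_pos_right hub hr
    · calc (2:ℝ)^j * r ≤ t * r := mul_le_mul_of_nonneg_right hlb hr.le
        _ = ‖x‖ := by rw [ht]; field_simp
  have key : ∀ j : ℕ, ((2:ℝ)^j * r)^(-b) * ((2:ℝ)^(j+1) * r)^(n:ℕ)
      = 2^n * r^((n:ℝ)-b) * q^j := by
    intro j
    have h2j : (0:ℝ) < 2^j := by positivity
    have h2j1 : (0:ℝ) < 2^(j+1) := by positivity
    have e1 : ((2:ℝ)^j * r)^(-b) = (2:ℝ)^((j:ℝ)*(-b)) * r^(-b) := by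
      rw [Real.mul_rpow h2j.le hr.le, ← Real.rpow_natCast (2:ℝ) j,
        ← Real.rpow_mul two_pos.le]
    have e2 : ((2:ℝ)^(j+1) * r)^(n:ℕ) = (2:ℝ)^(((j:ℝ)+1)*(n:ℝ)) * r^((n:ℝ)) := by
      rw [mul_pow, ← Real.rpow_natCast ((2:ℝ)^(j+1)) n, ← Real.rpow_natCast (2:ℝ) (j+1),
        ← Real.rpow_mul two_pos.le, ← Real.rpow_natCast r n]
      push_cast; ring_nf
    have e3 : q^j = (2:ℝ)^(((n:ℝ)-b)*(j:ℝ)) := by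
      rw [← Real.rpow_natCast q j, hq, ← Real.rpow_mul two_pos.le]
    rw [e1, e2, e3, ← Real.rpow_natCast (2:ℝ) n]
    rw [show (2:ℝ)^((j:ℝ)*(-b)) * r^(-b) * ((2:ℝ)^(((j:ℝ)+1)*(n:ℝ)) * r^((n:ℝ))) =
      ((2:ℝ)^((j:ℝ)*(-b)) * (2:ℝ)^(((j:ℝ)+1)*(n:ℝ))) * (r^(-b) * r^((n:ℝ))) from by ring]
    rw [← Real.rpow_add two_pos, ← Real.rpow_add hr]
    rw [show (j:ℝ)*(-b) + ((j:ℝ)+1)*(n:ℝ) = (n:ℝ) + ((n:ℝ)-b)*(j:ℝ) from by ring,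
      Real.rpow_add two_pos, show -b + (n:ℝ) = (n:ℝ) - b from by ring]
    ring
  calc ∫⁻ x in (ball (0:E) r)ᶜ, ENNReal.ofReal (‖x‖ ^ (-b))
      ≤ ∫⁻ x in ⋃ j, S j, ENNReal.ofReal (‖x‖ ^ (-b)) := lintegral_mono_set hcover
    _ ≤ ∑' j, ∫⁻ x in S j, ENNReal.ofReal (‖x‖ ^ (-b)) := lintegral_iUnion_le _ _
    _ ≤ ∑' j, ENNReal.ofReal (2^n * r^((n:ℝ)-b) * q^j) * V₁ := by
        apply ENNReal.tsum_le_tsum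
        intro j
        have h2j : (0:ℝ) < 2^j * r := by positivity
        have hstep : ∫⁻ x in S j, ENNReal.ofReal (‖x‖ ^ (-b))
            ≤ ∫⁻ _ in S j, ENNReal.ofReal (((2:ℝ)^j * r) ^ (-b)) := by
          apply setLIntegral_mono (by fun_prop)
          intro x hx
          apply ENNReal.ofReal_le_ofReal
          apply Real.rpow_le_rpow_of_nonpos h2j (by
            have := hx.2
            rw [mem_ball, dist_zero_right, not_lt] at this
            exact this) (by linarith)
        refine hstep.trans ?_
        rw [setLIntegral_const]
        have hvol : volume (S j) ≤ ENNReal.ofReal (((2:ℝ)^(j+1) * r)^(n:ℕ)) * V₁ := by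
          refine (measure_mono Set.diff_subset).trans ?_
          rw [Measure.addHaar_ball_of_pos _ _ (by positivity)]
          apply le_of_eq
          congr 1
          · congr 1
            congr 1
            exact finrank_euclideanSpace_fin
        calc ENNReal.ofReal (((2:ℝ)^j * r) ^ (-b)) * volume (S j)
            ≤ ENNReal.ofReal (((2:ℝ)^j * r) ^ (-b)) *
              (ENNReal.ofReal (((2:ℝ)^(j+1) * r)^(n:ℕ)) * V₁) := by gcongr
          _ = ENNReal.ofReal (2^n * r^((n:ℝ)-b) * q^j) * V₁ := by
              rw [← mul_assoc, ← ENNReal.ofReal_mul (Real.rpow_nonneg h2j.le _), key j]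
    _ = ENNReal.ofReal (2^n * r^((n:ℝ)-b)) * ENNReal.ofReal ((1-q)⁻¹) * V₁ := by
        rw [ENNReal.tsum_mul_right]
        congr 1
        have : ∀ j : ℕ, ENNReal.ofReal (2^n * r^((n:ℝ)-b) * q^j)
            = ENNReal.ofReal (2^n * r^((n:ℝ)-b)) * ENNReal.ofReal (q^j) := fun j => by
          rw [ENNReal.ofReal_mul (by positivity)]
        simp_rw [this]
        rw [ENNReal.tsum_mul_left]
        congr 1
        rw [← ENNReal.ofReal_tsum_of_nonneg (fun j => by positivity)
          (summable_geometric_of_lt_one hq0.le hq1), tsum_geometric_of_lt_one hq0.le hq1]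
    _ = ENNReal.ofReal (2^n * r^((n:ℝ)-b) * (1-q)⁻¹ * V₁.toReal) := by
        conv_lhs => rw [show V₁ = ENNReal.ofReal V₁.toReal from (ENNReal.ofReal_toReal hV₁fin).symm]
        rw [← ENNReal.ofReal_mul (by positivity), ← ENNReal.ofReal_mul (by positivity)]
    _ ≤ ENNReal.ofReal ((2^n * (1-q)⁻¹ * V₁.toReal + 1) * r ^ ((n:ℝ) - b)) := by
        apply ENNReal.ofReal_le_ofReal
        have h1 : 0 ≤ r ^ ((n:ℝ)-b) := Real.rpow_nonneg hr.le _
        nlinarith [ENNReal.toReal_nonneg (a := V₁), inv_nonneg.mpr hq1'.le, pow_pos (two_pos (α := ℝ)) n]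


lemma aux_weight (n : ℕ) (p s l γ : ℝ)
    (hp : 0 < p) (hs : 1 ≤ s) (hγ0 : 0 < γ) (hγ2 : γ < l / s - (n : ℝ) * (1 - 1 / s))
    (a : ℝ) (ha0 : 0 ≤ a) (haγ : a ≤ γ) :
    ∃ A : ℝ, 0 < A ∧ ∀ (M : EuclideanSpace ℝ (Fin n) → ℂ) (r : ℝ), 0 < r → Measurable M →
      (∫⁻ x in ball (0 : EuclideanSpace ℝ (Fin n)) r, (‖M x‖₊ : ℝ≥0∞) ^ s) ^ (1 / s)
          ≤ ENNReal.ofReal (r ^ ((n : ℝ) * (1 / s - 1 / p))) →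
      (∫⁻ x in (ball (0 : EuclideanSpace ℝ (Fin n)) r)ᶜ,
            (‖M x‖₊ : ℝ≥0∞) ^ s * ENNReal.ofReal (‖x‖ ^ l)) ^ (1 / s)
          ≤ ENNReal.ofReal (r ^ (l / s + (n : ℝ) * (1 / s - 1 / p))) →
      ∫⁻ x, (‖M x‖₊ : ℝ≥0∞) * ENNReal.ofReal (‖x‖ ^ a)
        ≤ ENNReal.ofReal (A * r ^ (a - (n:ℝ) * (1/p - 1))) := by
  set E := EuclideanSpace ℝ (Fin n)
  have hs0 : (0:ℝ) < s := by linarith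
  rcases eq_or_lt_of_le hs with hs1 | hs1
  · -- case s = 1
    subst hs1
    have hal : a - l ≤ 0 := by
      have : γ < l := by simpa using hγ2
      linarith
    refine ⟨2, two_pos, fun M r hr hM h1 h2 => ?_⟩
    simp only [one_div_one, ENNReal.rpow_one] at h1 h2
    have hball : ∫⁻ x in ball (0:E) r, (‖M x‖₊ : ℝ≥0∞) * ENNReal.ofReal (‖x‖ ^ a)
        ≤ ENNReal.ofReal (r ^ (a + (n:ℝ)*(1 - 1/p))) := by
      calc ∫⁻ x in ball (0:E) r, (‖M x‖₊ : ℝ≥0∞) * ENNReal.ofReal (‖x‖ ^ a)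
          ≤ ∫⁻ x in ball (0:E) r, ENNReal.ofReal (r ^ a) * (‖M x‖₊ : ℝ≥0∞) := by
            apply setLIntegral_mono' measurableSet_ball
            intro x hx
            rw [mul_comm]
            apply mul_le_mul_left
            apply ENNReal.ofReal_le_ofReal
            apply Real.rpow_le_rpow (norm_nonneg x) _ ha0
            rw [mem_ball, dist_zero_right] at hx
            exact hx.le
        _ = ENNReal.ofReal (r ^ a) * ∫⁻ x in ball (0:E) r, (‖M x‖₊ : ℝ≥0∞) :=
            lintegral_const_mul' _ _ ENNReal.ofReal_ne_top
        _ ≤ ENNReal.ofReal (r ^ a) * ENNReal.ofReal (r ^ ((n:ℝ)*(1 - 1/p))) := by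
            exact mul_le_mul_right h1 _
        _ = ENNReal.ofReal (r ^ (a + (n:ℝ)*(1 - 1/p))) := by
            rw [← ENNReal.ofReal_mul (Real.rpow_nonneg hr.le _), ← Real.rpow_add hr]
    have htail : ∫⁻ x in (ball (0:E) r)ᶜ, (‖M x‖₊ : ℝ≥0∞) * ENNReal.ofReal (‖x‖ ^ a)
        ≤ ENNReal.ofReal (r ^ (a + (n:ℝ)*(1 - 1/p))) := by
      calc ∫⁻ x in (ball (0:E) r)ᶜ, (‖M x‖₊ : ℝ≥0∞) * ENNReal.ofReal (‖x‖ ^ a)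
          ≤ ∫⁻ x in (ball (0:E) r)ᶜ,
              ENNReal.ofReal (r ^ (a-l)) * ((‖M x‖₊ : ℝ≥0∞) * ENNReal.ofReal (‖x‖ ^ l)) := by
            apply setLIntegral_mono' measurableSet_ball.compl
            intro x hx
            rw [Set.mem_compl_iff, mem_ball, dist_zero_right, not_lt] at hx
            have hx0 : (0:ℝ) < ‖x‖ := lt_of_lt_of_le hr hx
            rw [show ENNReal.ofReal (r ^ (a-l)) * ((‖M x‖₊ : ℝ≥0∞) * ENNReal.ofReal (‖x‖ ^ l))
              = (‖M x‖₊ : ℝ≥0∞) * (ENNReal.ofReal (r ^ (a-l)) * ENNReal.ofReal (‖x‖ ^ l)) from by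
                ring]
            apply mul_le_mul_right
            rw [← ENNReal.ofReal_mul (Real.rpow_nonneg hr.le _)]
            apply ENNReal.ofReal_le_ofReal
            calc ‖x‖ ^ a = ‖x‖ ^ (a - l) * ‖x‖ ^ l := by
                  rw [← Real.rpow_add hx0]; ring_nf
              _ ≤ r ^ (a-l) * ‖x‖ ^ l := by
                  apply mul_le_mul_of_nonneg_right _ (Real.rpow_nonneg (norm_nonneg x) _)
                  exact Real.rpow_le_rpow_of_nonpos hr hx hal
        _ = ENNReal.ofReal (r ^ (a-l)) * ∫⁻ x in (ball (0:E) r)ᶜ,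
              (‖M x‖₊ : ℝ≥0∞) * ENNReal.ofReal (‖x‖ ^ l) :=
            lintegral_const_mul' _ _ ENNReal.ofReal_ne_top
        _ ≤ ENNReal.ofReal (r ^ (a-l)) * ENNReal.ofReal (r ^ (l/1 + (n:ℝ)*(1 - 1/p))) :=
            mul_le_mul_right h2 _
        _ = ENNReal.ofReal (r ^ (a + (n:ℝ)*(1 - 1/p))) := by
            rw [← ENNReal.ofReal_mul (Real.rpow_nonneg hr.le _), ← Real.rpow_add hr]
            norm_num
            rw [show a - l + (l + (n:ℝ) * (1 - p⁻¹)) = a + (n:ℝ) * (1 - p⁻¹) from by ring]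
    calc ∫⁻ x, (‖M x‖₊ : ℝ≥0∞) * ENNReal.ofReal (‖x‖ ^ a)
        = (∫⁻ x in ball (0:E) r, (‖M x‖₊ : ℝ≥0∞) * ENNReal.ofReal (‖x‖ ^ a))
          + ∫⁻ x in (ball (0:E) r)ᶜ, (‖M x‖₊ : ℝ≥0∞) * ENNReal.ofReal (‖x‖ ^ a) :=
          (lintegral_add_compl _ measurableSet_ball).symm
      _ ≤ ENNReal.ofReal (r ^ (a + (n:ℝ)*(1 - 1/p))) + ENNReal.ofReal (r ^ (a + (n:ℝ)*(1 - 1/p))) :=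
          add_le_add hball htail
      _ = ENNReal.ofReal (2 * r ^ (a - (n:ℝ) * (1/p - 1))) := by
          rw [show a + (n:ℝ)*(1 - 1/p) = a - (n:ℝ) * (1/p - 1) from by ring,
            ← ENNReal.ofReal_add (Real.rpow_nonneg hr.le _) (Real.rpow_nonneg hr.le _)]
          norm_num [two_mul]
  · -- case 1 < s
    set q : ℝ := Real.conjExponent s with hqdef
    have hpq : s.HolderConjugate q := Real.HolderConjugate.conjExponent hs1
    have hq0 : 0 < q := hpq.symm.pos
    have hinv : 1/s + 1/q = 1 := by
      have := hpq.inv_add_inv_eq_one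
      simpa [one_div] using this
    set b : ℝ := (l/s - a) * q with hbdef
    have hnq : (n:ℝ) * (1 - 1/s) = (n:ℝ) * (1/q) := by
      have h : 1 - 1/s = 1/q := by linarith
      rw [h]
    have hb : (n:ℝ) < b := by
      have h1 : (n:ℝ) * (1/q) < l/s - a := by
        have h2 := hγ2
        rw [hnq] at h2
        linarith
      calc (n:ℝ) = ((n:ℝ) * (1/q)) * q := by field_simp
        _ < (l/s - a) * q := mul_lt_mul_of_pos_right h1 hq0
    obtain ⟨c, hc0, hc⟩ := aux_tail n b hb
    set V₁ := volume (ball (0:EuclideanSpace ℝ (Fin n)) 1) with hV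
    have hV₁fin : V₁ ≠ ∞ := measure_ball_lt_top.ne
    refine ⟨V₁.toReal ^ (1/q) + c ^ (1/q) + 1, by positivity, fun M r hr hM h1 h2 => ?_⟩
    have hMmeas : Measurable fun x : E => (‖M x‖₊ : ℝ≥0∞) := hM.nnnorm.coe_nnreal_ennreal
    have hball : ∫⁻ x in ball (0:E) r, (‖M x‖₊ : ℝ≥0∞) * ENNReal.ofReal (‖x‖^a)
        ≤ ENNReal.ofReal ((V₁.toReal ^ (1/q)) * r ^ (a - (n:ℝ)*(1/p-1))) := by
      have hstep : ∫⁻ x in ball (0:E) r, (‖M x‖₊ : ℝ≥0∞)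
          ≤ ENNReal.ofReal (r ^ ((n:ℝ)*(1/s-1/p))) *
            (ENNReal.ofReal (r^((n:ℝ)*(1/q))) * ENNReal.ofReal (V₁.toReal ^ (1/q))) := by
        have hH := ENNReal.lintegral_mul_le_Lp_mul_Lq (volume.restrict (ball (0:E) r)) hpq
          hMmeas.aemeasurable (aemeasurable_const (b := (1:ℝ≥0∞)))
        simp only [Pi.mul_apply, mul_one, ENNReal.one_rpow] at hH
        rw [lintegral_one, Measure.restrict_apply MeasurableSet.univ, Set.univ_inter] at hH
        refine hH.trans ?_
        apply mul_le_mul' h1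
        rw [Measure.addHaar_ball_of_pos _ _ hr,
          show Module.finrank ℝ E = n from finrank_euclideanSpace_fin,
          ENNReal.mul_rpow_of_nonneg _ _ (by positivity)]
        apply mul_le_mul'
        · rw [ENNReal.ofReal_rpow_of_nonneg (by positivity) (by positivity)]
          apply le_of_eq
          congr 1
          rw [← Real.rpow_natCast r n, ← Real.rpow_mul hr.le]
        · apply le_of_eq
          rw [← ENNReal.ofReal_rpow_of_nonneg ENNReal.toReal_nonneg (by positivity)]
          congr 1
          exact (ENNReal.ofReal_toReal hV₁fin).symm
      calc ∫⁻ x in ball (0:E) r, (‖M x‖₊ : ℝ≥0∞) * ENNReal.ofReal (‖x‖ ^ a)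
          ≤ ∫⁻ x in ball (0:E) r, ENNReal.ofReal (r ^ a) * (‖M x‖₊ : ℝ≥0∞) := by
            apply setLIntegral_mono' measurableSet_ball
            intro x hx
            rw [mul_comm]
            apply mul_le_mul_left
            apply ENNReal.ofReal_le_ofReal
            apply Real.rpow_le_rpow (norm_nonneg x) _ ha0
            rw [mem_ball, dist_zero_right] at hx
            exact hx.le
        _ = ENNReal.ofReal (r ^ a) * ∫⁻ x in ball (0:E) r, (‖M x‖₊ : ℝ≥0∞) :=
            lintegral_const_mul' _ _ ENNReal.ofReal_ne_top
        _ ≤ ENNReal.ofReal (r ^ a) * (ENNReal.ofReal (r ^ ((n:ℝ)*(1/s-1/p))) *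
            (ENNReal.ofReal (r^((n:ℝ)*(1/q))) * ENNReal.ofReal (V₁.toReal ^ (1/q)))) :=
            mul_le_mul_right hstep _
        _ = ENNReal.ofReal ((V₁.toReal ^ (1/q)) * r ^ (a - (n:ℝ)*(1/p-1))) := by
            rw [← ENNReal.ofReal_mul (by positivity), ← ENNReal.ofReal_mul (by positivity),
              ← ENNReal.ofReal_mul (by positivity)]
            congr 1
            rw [show r ^ a * (r ^ ((n:ℝ)*(1/s-1/p)) * (r^((n:ℝ)*(1/q)) * V₁.toReal ^ (1/q)))
              = V₁.toReal ^ (1/q) * (r ^ a * r ^ ((n:ℝ)*(1/s-1/p)) * r^((n:ℝ)*(1/q))) from by ring,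
              ← Real.rpow_add hr, ← Real.rpow_add hr]
            congr 1
            rw [show a + (n:ℝ)*(1/s-1/p) + (n:ℝ)*(1/q) = a + (n:ℝ)*(1/s-1/p) + (n:ℝ)*(1-1/s)
              from by rw [← hnq]]
            ring
    have htail : ∫⁻ x in (ball (0:E) r)ᶜ, (‖M x‖₊ : ℝ≥0∞) * ENNReal.ofReal (‖x‖^a)
        ≤ ENNReal.ofReal ((c ^ (1/q)) * r ^ (a - (n:ℝ)*(1/p-1))) := by
      have hsplit : ∀ x : E, x ∈ (ball (0:E) r)ᶜ →
          (‖M x‖₊ : ℝ≥0∞) * ENNReal.ofReal (‖x‖^a)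
          = ((‖M x‖₊ : ℝ≥0∞) * ENNReal.ofReal (‖x‖^(l/s))) * ENNReal.ofReal (‖x‖^(a - l/s)) := by
        intro x hx
        rw [Set.mem_compl_iff, mem_ball, dist_zero_right, not_lt] at hx
        have hx0 : (0:ℝ) < ‖x‖ := lt_of_lt_of_le hr hx
        rw [mul_assoc, ← ENNReal.ofReal_mul (Real.rpow_nonneg (norm_nonneg x) _),
          ← Real.rpow_add hx0]
        congr 2
        ring
      rw [setLIntegral_congr_fun measurableSet_ball.compl (fun x hx => hsplit x hx)]
      have hfmeas : AEMeasurable (fun x : E => (‖M x‖₊ : ℝ≥0∞) * ENNReal.ofReal (‖x‖^(l/s)))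
          (volume.restrict (ball (0:E) r)ᶜ) := by
        apply AEMeasurable.mul hMmeas.aemeasurable
        fun_prop
      have hgmeas : AEMeasurable (fun x : E => ENNReal.ofReal (‖x‖^(a - l/s)))
          (volume.restrict (ball (0:E) r)ᶜ) := by fun_prop
      have hH := ENNReal.lintegral_mul_le_Lp_mul_Lq (volume.restrict (ball (0:E) r)ᶜ) hpq
        hfmeas hgmeas
      simp only [Pi.mul_apply] at hH
      refine hH.trans ?_
      have hf : ∫⁻ x in (ball (0:E) r)ᶜ, ((‖M x‖₊ : ℝ≥0∞) * ENNReal.ofReal (‖x‖^(l/s))) ^ s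
          = ∫⁻ x in (ball (0:E) r)ᶜ, (‖M x‖₊ : ℝ≥0∞)^s * ENNReal.ofReal (‖x‖^l) := by
        apply lintegral_congr
        intro x
        rw [ENNReal.mul_rpow_of_nonneg _ _ hs0.le,
          ENNReal.ofReal_rpow_of_nonneg (Real.rpow_nonneg (norm_nonneg x) _) hs0.le,
          ← Real.rpow_mul (norm_nonneg x), div_mul_cancel₀ l hs0.ne']
      have hg : ∫⁻ x in (ball (0:E) r)ᶜ, (ENNReal.ofReal (‖x‖^(a - l/s))) ^ q
          = ∫⁻ x in (ball (0:E) r)ᶜ, ENNReal.ofReal (‖x‖ ^ (-b)) := by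
        apply lintegral_congr
        intro x
        rw [ENNReal.ofReal_rpow_of_nonneg (Real.rpow_nonneg (norm_nonneg x) _) hq0.le,
          ← Real.rpow_mul (norm_nonneg x)]
        congr 1
        rw [hbdef]
        ring
      rw [hf, hg]
      calc (∫⁻ x in (ball (0:E) r)ᶜ, (‖M x‖₊ : ℝ≥0∞)^s * ENNReal.ofReal (‖x‖^l)) ^ (1/s) *
            (∫⁻ x in (ball (0:E) r)ᶜ, ENNReal.ofReal (‖x‖ ^ (-b))) ^ (1/q)
          ≤ ENNReal.ofReal (r ^ (l/s + (n:ℝ)*(1/s-1/p))) *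
            (ENNReal.ofReal (c * r ^ ((n:ℝ)-b))) ^ (1/q) :=
            mul_le_mul' h2 (ENNReal.rpow_le_rpow (hc r hr) (by positivity))
        _ = ENNReal.ofReal ((c ^ (1/q)) * r ^ (a - (n:ℝ)*(1/p-1))) := by
            rw [ENNReal.ofReal_rpow_of_nonneg (by positivity) (by positivity),
              Real.mul_rpow hc0.le (Real.rpow_nonneg hr.le _),
              ← Real.rpow_mul hr.le,
              ← ENNReal.ofReal_mul (Real.rpow_nonneg hr.le _)]
            congr 1
            rw [show r ^ (l/s + (n:ℝ)*(1/s-1/p)) * (c ^ (1/q) * r ^ (((n:ℝ)-b)*(1/q)))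
              = c ^ (1/q) * (r ^ (l/s + (n:ℝ)*(1/s-1/p)) * r ^ (((n:ℝ)-b)*(1/q))) from by ring,
              ← Real.rpow_add hr]
            congr 2
            have expand : ((n:ℝ)-b)*(1/q) = (n:ℝ)*(1/q) - (l/s - a) := by
              rw [hbdef]
              field_simp
            rw [expand, show (n:ℝ)*(1/q) = (n:ℝ)*(1-1/s) from hnq.symm]
            ring
    calc ∫⁻ x, (‖M x‖₊ : ℝ≥0∞) * ENNReal.ofReal (‖x‖ ^ a)
        = (∫⁻ x in ball (0:E) r, (‖M x‖₊ : ℝ≥0∞) * ENNReal.ofReal (‖x‖ ^ a))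
          + ∫⁻ x in (ball (0:E) r)ᶜ, (‖M x‖₊ : ℝ≥0∞) * ENNReal.ofReal (‖x‖ ^ a) :=
          (lintegral_add_compl _ measurableSet_ball).symm
      _ ≤ ENNReal.ofReal ((V₁.toReal ^ (1/q)) * r ^ (a - (n:ℝ)*(1/p-1)))
          + ENNReal.ofReal ((c ^ (1/q)) * r ^ (a - (n:ℝ)*(1/p-1))) := add_le_add hball htail
      _ ≤ ENNReal.ofReal ((V₁.toReal ^ (1/q) + c ^ (1/q) + 1) * r ^ (a - (n:ℝ) * (1/p - 1))) := by
          rw [← ENNReal.ofReal_add (by positivity) (by positivity)]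
          apply ENNReal.ofReal_le_ofReal
          have h0 : 0 ≤ r ^ (a - (n:ℝ) * (1/p - 1)) := Real.rpow_nonneg hr.le _
          nlinarith [Real.rpow_nonneg (ENNReal.toReal_nonneg (a := V₁)) (1/q),
            Real.rpow_nonneg hc0.le (1/q)]


lemma aux_coord (n : ℕ) (x : EuclideanSpace ℝ (Fin n)) (i : Fin n) : |x i| ≤ ‖x‖ := by
  rw [EuclideanSpace.norm_eq]
  rw [show |x i| = Real.sqrt ((x i)^2) from (Real.sqrt_sq_eq_abs _).symm]
  apply Real.sqrt_le_sqrt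
  rw [← _root_.sq_abs]
  apply Finset.single_le_sum (f := fun j => ‖x j‖^2) (fun j _ => by positivity) (Finset.mem_univ i)
    |>.trans_eq'
  rw [Real.norm_eq_abs, _root_.sq_abs]


lemma aux_mono_norm (n : ℕ) (x : EuclideanSpace ℝ (Fin n)) (α : Fin n → ℕ) :
    |∏ i, x i ^ α i| ≤ ‖x‖ ^ (∑ i, α i) := by
  rw [Finset.abs_prod, ← Finset.prod_pow_eq_pow_sum]
  apply Finset.prod_le_prod (fun i _ => by positivity)
  intro i _
  rw [_root_.abs_pow]
  exact pow_le_pow_left₀ (abs_nonneg _) (aux_coord n x i) _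


lemma aux_expand {R : Type*} [CommSemiring R] (n k : ℕ) (x ξ : Fin n → R) :
    (∑ i, x i * ξ i)^k = ∑ f ∈ Fintype.piFinset (fun _ : Fin k => (Finset.univ : Finset (Fin n))),
      (∏ j, ξ (f j)) * ∏ i, x i ^ (Finset.univ.filter (fun j => f j = i)).card := by
  rw [show (∑ i, x i * ξ i)^k = ∏ _j : Fin k, (∑ i, x i * ξ i) from by
    rw [Finset.prod_const, Finset.card_univ, Fintype.card_fin]]
  rw [Finset.prod_univ_sum]
  apply Finset.sum_congr rfl
  intro f _
  rw [Finset.prod_mul_distrib, mul_comm]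
  congr 1
  rw [Finset.prod_comp (fun i => x i) f]
  apply Finset.prod_subset (Finset.subset_univ _)
  intro i _ hi
  rw [Finset.filter_eq_empty_iff.mpr, Finset.card_empty, pow_zero]
  intro j _ hji
  exact hi (hji ▸ Finset.mem_image_of_mem f (Finset.mem_univ j))


lemma aux_fiber_sum (n k : ℕ) (f : Fin k → Fin n) :
    ∑ i, (Finset.univ.filter (fun j => f j = i)).card = k := by
  rw [← Finset.card_eq_sum_card_fiberwise (fun x _ => Finset.mem_univ (f x)),
    Finset.card_univ, Fintype.card_fin]


end AuxLemmas

open Real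

set_option maxHeartbeats 4000000 in
/-- Pointwise Fourier transform bound for a molecule centered at the origin:
`|M̂(ξ)| ≤ C(|ξ|^γ r^{γ - γ_p} + Σ_{|α| ≤ N} |ξ|^{|α|} |∫ M(x) x^α dx|)`. -/
theorem stmt15 (n : ℕ) (p s l γ : ℝ) (N : ℕ)
    (hp : 0 < p) (hp1 : p ≤ 1) (hs : 1 ≤ s) (hps : p < s)
    (hl : (n : ℝ) * (s / p - 1) < l)
    (hγ1 : (n : ℝ) * (1 / p - 1) < γ) (hγ2 : γ < l / s - (n : ℝ) * (1 - 1 / s))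
    (hN1 : (N : ℝ) < γ) (hN2 : γ ≤ (N : ℝ) + 1) :
    ∃ C : ℝ, 0 < C ∧
      ∀ (M : EuclideanSpace ℝ (Fin n) → ℂ) (r : ℝ), 0 < r → Measurable M →
        (∫⁻ x in ball (0 : EuclideanSpace ℝ (Fin n)) r, (‖M x‖₊ : ℝ≥0∞) ^ s) ^ (1 / s)
          ≤ ENNReal.ofReal (r ^ ((n : ℝ) * (1 / s - 1 / p))) →
        (∫⁻ x in (ball (0 : EuclideanSpace ℝ (Fin n)) r)ᶜ,
            (‖M x‖₊ : ℝ≥0∞) ^ s * ENNReal.ofReal (‖x‖ ^ l)) ^ (1 / s)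
          ≤ ENNReal.ofReal (r ^ (l / s + (n : ℝ) * (1 / s - 1 / p))) →
        ∀ ξ : EuclideanSpace ℝ (Fin n),
          ‖𝓕 M ξ‖ ≤ C *
            (‖ξ‖ ^ γ * r ^ (γ - (n : ℝ) * (1 / p - 1)) +
              ∑ α ∈ (Fintype.piFinset fun _ : Fin n => Finset.range (N + 1)) |>.filter
                  (fun α => ∑ i, α i ≤ N),
                ‖ξ‖ ^ ((∑ i, (α i : ℝ))) *
                  ‖∫ x, M x * ((∏ i, x i ^ α i : ℝ) : ℂ)‖) := by
  have hγ0 : 0 < γ := lt_of_le_of_lt (Nat.cast_nonneg N) hN1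
  obtain ⟨A, hA0, hA⟩ := aux_weight n p s l γ hp hs hγ0 hγ2 γ hγ0.le le_rfl
  have hπ1 : (1:ℝ) ≤ 2*π := by nlinarith [Real.pi_gt_three]
  refine ⟨(N+2) * (2*π)^γ * A + (N+1) * (2*π)^N * ((n:ℝ)+1)^N + 1, by positivity,
    fun M r hr hM h1 h2 ξ => ?_⟩
  have hWγ := hA M r hr hM h1 h2
  have hWk : ∀ k : ℕ, (k:ℝ) ≤ γ → ∫⁻ x, (‖M x‖₊ : ℝ≥0∞) * ENNReal.ofReal (‖x‖ ^ (k:ℝ)) < ⊤ := by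
    intro k hk
    obtain ⟨A', hA'0, hA'⟩ := aux_weight n p s l γ hp hs hγ0 hγ2 (k:ℝ) (by positivity) hk
    exact lt_of_le_of_lt (hA' M r hr hM h1 h2) ENNReal.ofReal_lt_top
  -- integrability of monomial moments
  have hmono_int : ∀ α : Fin n → ℕ, (∑ i, α i) ≤ N →
      Integrable (fun x : EuclideanSpace ℝ (Fin n) => M x * ((∏ i, x i ^ α i : ℝ) : ℂ)) := by
    intro α hα
    have hcont : Continuous fun x : EuclideanSpace ℝ (Fin n) => ((∏ i, x i ^ α i : ℝ) : ℂ) := by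
      apply Complex.continuous_ofReal.comp
      apply continuous_finset_prod
      intro i _
      exact ((EuclideanSpace.proj (𝕜 := ℝ) i).continuous).pow _
    constructor
    · exact (hM.mul hcont.measurable).aestronglyMeasurable
    · have hk : ((∑ i, α i : ℕ):ℝ) ≤ γ :=
        le_trans (by exact_mod_cast hα) hN1.le
      refine lt_of_le_of_lt ?_ (hWk (∑ i, α i) hk)
      apply lintegral_mono
      intro x
      dsimp only
      rw [enorm_mul]
      apply mul_le_mul_right
      rw [← ofReal_norm]
      apply ENNReal.ofReal_le_ofReal
      rw [Complex.norm_real, Real.norm_eq_abs]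
      calc |∏ i, x i ^ α i| ≤ ‖x‖ ^ (∑ i, α i) := aux_mono_norm n x α
        _ = ‖x‖ ^ ((∑ i, α i : ℕ):ℝ) := (Real.rpow_natCast _ _).symm
  have hMint : Integrable M := by
    constructor
    · exact hM.aestronglyMeasurable
    · refine lt_of_le_of_lt ?_ (hWk 0 (by exact_mod_cast hγ0.le))
      apply lintegral_mono
      intro x
      dsimp only
      rw [Nat.cast_zero, Real.rpow_zero, ENNReal.ofReal_one, mul_one]
      exact le_rfl
  -- Fourier setup
  set θ : EuclideanSpace ℝ (Fin n) → ℝ := fun x => -2 * π * (inner ℝ x ξ) with hθ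
  set Pf : EuclideanSpace ℝ (Fin n) → ℂ :=
    fun x => ∑ k ∈ Finset.range (N+1), (((θ x : ℝ):ℂ) * Complex.I)^k / (k.factorial : ℂ) with hPf
  have hinner : ∀ x : EuclideanSpace ℝ (Fin n), (inner ℝ x ξ : ℝ) = ∑ i, x i * ξ i := by
    intro x
    simp [PiLp.inner_apply, RCLike.inner_apply, conj_trivial]
    exact Finset.sum_congr rfl fun i _ => mul_comm _ _
  have hFT : 𝓕 M ξ = ∫ x, Complex.exp (((θ x : ℝ):ℂ) * Complex.I) * M x := by
    rw [Real.fourier_eq']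
    simp only [hθ, smul_eq_mul]
  have hθcont : Continuous θ := by
    rw [hθ]
    exact continuous_const.mul (continuous_id.inner continuous_const)
  have hint_EM : Integrable (fun x : EuclideanSpace ℝ (Fin n) =>
      Complex.exp (((θ x : ℝ):ℂ) * Complex.I) * M x) := by
    apply hMint.bdd_mul (c := 1)
    · exact ((Complex.continuous_exp.comp
        ((Complex.continuous_ofReal.comp hθcont).mul continuous_const)).aestronglyMeasurable)
    · refine Filter.Eventually.of_forall (fun x => ?_)
      rw [Complex.norm_exp]
      simp
  -- per-term integrand and integrability
  have hαf : ∀ (k : ℕ) (f : Fin k → Fin n),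
      (∑ i, (Finset.univ.filter (fun j => f j = i)).card) = k := fun k f => aux_fiber_sum n k f
  have hint_term : ∀ k : ℕ, k ≤ N → ∀ f : Fin k → Fin n,
      Integrable (fun x : EuclideanSpace ℝ (Fin n) =>
        ((((-2)*π)^k / k.factorial : ℝ) : ℂ) * Complex.I^k * (∏ j, ((ξ (f j) : ℝ) : ℂ)) *
          (M x * ((∏ i, x i ^ (Finset.univ.filter (fun j => f j = i)).card : ℝ) : ℂ))) := by
    intro k hk f
    exact (hmono_int _ (by rw [hαf k f]; exact hk)).const_mul _
  have hPexpand : ∀ x : EuclideanSpace ℝ (Fin n), Pf x * M x =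
      ∑ k ∈ Finset.range (N+1),
        ∑ f ∈ Fintype.piFinset (fun _ : Fin k => (Finset.univ : Finset (Fin n))),
          ((((-2)*π)^k / k.factorial : ℝ) : ℂ) * Complex.I^k * (∏ j, ((ξ (f j) : ℝ) : ℂ)) *
            (M x * ((∏ i, x i ^ (Finset.univ.filter (fun j => f j = i)).card : ℝ) : ℂ)) := by
    intro x
    rw [hPf]
    dsimp only
    rw [Finset.sum_mul]
    refine Finset.sum_congr rfl fun k _ => ?_
    have hθxC : ((θ x : ℝ):ℂ) = (((-2)*π : ℝ):ℂ) * ∑ i, ((x i : ℝ):ℂ) * ((ξ i : ℝ):ℂ) := by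
      rw [hθ]
      dsimp only
      rw [hinner x]
      push_cast
      ring
    rw [mul_pow]
    calc ((θ x : ℝ):ℂ)^k * Complex.I^k / (k.factorial : ℂ) * M x
        = ((((-2)*π : ℝ):ℂ)^k *
            ∑ f ∈ Fintype.piFinset (fun _ : Fin k => (Finset.univ : Finset (Fin n))),
              (∏ j, ((ξ (f j) : ℝ):ℂ)) *
                ∏ i, ((x i : ℝ):ℂ) ^ (Finset.univ.filter (fun j => f j = i)).card) *
            (Complex.I^k / (k.factorial : ℂ) * M x) := by
          rw [hθxC, mul_pow, aux_expand n k (fun i => ((x i : ℝ):ℂ)) (fun i => ((ξ i : ℝ):ℂ))]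
          ring
      _ = _ := by
          rw [Finset.mul_sum, Finset.sum_mul]
          refine Finset.sum_congr rfl fun f _ => ?_
          have hcast : ((∏ i, x i ^ (Finset.univ.filter (fun j => f j = i)).card : ℝ) : ℂ)
              = ∏ i, ((x i : ℝ):ℂ) ^ (Finset.univ.filter (fun j => f j = i)).card := by
            push_cast
            rfl
          rw [hcast]
          push_cast
          ring
  have hint_PM : Integrable (fun x : EuclideanSpace ℝ (Fin n) => Pf x * M x) := by
    rw [show (fun x : EuclideanSpace ℝ (Fin n) => Pf x * M x) = fun x =>
      ∑ k ∈ Finset.range (N+1),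
        ∑ f ∈ Fintype.piFinset (fun _ : Fin k => (Finset.univ : Finset (Fin n))),
          ((((-2)*π)^k / k.factorial : ℝ) : ℂ) * Complex.I^k * (∏ j, ((ξ (f j) : ℝ) : ℂ)) *
            (M x * ((∏ i, x i ^ (Finset.univ.filter (fun j => f j = i)).card : ℝ) : ℂ))
      from funext hPexpand]
    apply integrable_finset_sum
    intro k hk
    apply integrable_finset_sum
    intro f _
    exact hint_term k (Nat.lt_succ_iff.mp (Finset.mem_range.mp hk)) f
  have hint_R : Integrable (fun x : EuclideanSpace ℝ (Fin n) =>
      (Complex.exp (((θ x : ℝ):ℂ) * Complex.I) - Pf x) * M x) := by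
    apply (hint_EM.sub hint_PM).congr
    apply Filter.Eventually.of_forall
    intro x
    simp only [Pi.sub_apply]
    ring
  have hdecomp : 𝓕 M ξ = (∫ x, (Complex.exp (((θ x : ℝ):ℂ) * Complex.I) - Pf x) * M x)
      + ∫ x, Pf x * M x := by
    rw [hFT, ← integral_add hint_R hint_PM]
    congr 1
    funext x
    ring
  have hPM_eq : ∫ x, Pf x * M x =
      ∑ k ∈ Finset.range (N+1),
        ∑ f ∈ Fintype.piFinset (fun _ : Fin k => (Finset.univ : Finset (Fin n))),
          ((((-2)*π)^k / k.factorial : ℝ) : ℂ) * Complex.I^k * (∏ j, ((ξ (f j) : ℝ) : ℂ)) *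
            ∫ x, M x * ((∏ i, x i ^ (Finset.univ.filter (fun j => f j = i)).card : ℝ) : ℂ) := by
    rw [show (fun x : EuclideanSpace ℝ (Fin n) => Pf x * M x) = fun x =>
      ∑ k ∈ Finset.range (N+1),
        ∑ f ∈ Fintype.piFinset (fun _ : Fin k => (Finset.univ : Finset (Fin n))),
          ((((-2)*π)^k / k.factorial : ℝ) : ℂ) * Complex.I^k * (∏ j, ((ξ (f j) : ℝ) : ℂ)) *
            (M x * ((∏ i, x i ^ (Finset.univ.filter (fun j => f j = i)).card : ℝ) : ℂ))
      from funext hPexpand]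
    rw [integral_finset_sum _ (fun k hk => integrable_finset_sum _
      (fun f _ => hint_term k (Nat.lt_succ_iff.mp (Finset.mem_range.mp hk)) f))]
    refine Finset.sum_congr rfl fun k hk => ?_
    rw [integral_finset_sum _ (fun f _ => hint_term k (Nat.lt_succ_iff.mp (Finset.mem_range.mp hk)) f)]
    refine Finset.sum_congr rfl fun f _ => ?_
    exact integral_const_mul _ _
  -- Bound on the remainder term
  have hbound1 : ‖∫ x, (Complex.exp (((θ x : ℝ):ℂ) * Complex.I) - Pf x) * M x‖
      ≤ (N+2) * (2*π)^γ * A * (‖ξ‖^γ * r^(γ - (n:ℝ)*(1/p-1))) := by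
    refine (norm_integral_le_lintegral_norm _).trans ?_
    apply ENNReal.toReal_le_of_le_ofReal (by positivity)
    calc ∫⁻ x, ENNReal.ofReal ‖(Complex.exp (((θ x : ℝ):ℂ) * Complex.I) - Pf x) * M x‖
        ≤ ∫⁻ x, ENNReal.ofReal ((N+2) * (2*π)^γ * ‖ξ‖^γ) *
            ((‖M x‖₊ : ℝ≥0∞) * ENNReal.ofReal (‖x‖^γ)) := by
          apply lintegral_mono
          intro x
          dsimp only
          rw [norm_mul, ENNReal.ofReal_mul (norm_nonneg _), ofReal_norm (M x)]
          rw [show ENNReal.ofReal ((N+2) * (2*π)^γ * ‖ξ‖^γ) *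
              ((‖M x‖₊ : ℝ≥0∞) * ENNReal.ofReal (‖x‖^γ))
            = (ENNReal.ofReal ((N+2) * (2*π)^γ * ‖ξ‖^γ) * ENNReal.ofReal (‖x‖^γ)) *
              (‖M x‖₊ : ℝ≥0∞) from by ring]
          apply mul_le_mul_left
          rw [← ENNReal.ofReal_mul (by positivity)]
          apply ENNReal.ofReal_le_ofReal
          have ht : ‖Complex.exp (((θ x : ℝ):ℂ) * Complex.I) - Pf x‖ ≤ (N+2) * |θ x|^γ := by
            have h0 := aux_taylor N γ hγ0 hN1 hN2 (θ x)
            rw [hPf]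
            exact h0
          refine ht.trans ?_
          have hθb : |θ x| ≤ 2*π*(‖x‖*‖ξ‖) := by
            rw [hθ]
            dsimp only
            rw [abs_mul, show |(-2:ℝ)*π| = 2*π from by
              rw [abs_of_nonpos (by nlinarith [Real.pi_pos])]; ring]
            apply mul_le_mul_of_nonneg_left _ (by positivity)
            exact abs_real_inner_le_norm x ξ
          calc (N+2:ℝ)*|θ x|^γ ≤ (N+2)*(2*π*(‖x‖*‖ξ‖))^γ := by
                apply mul_le_mul_of_nonneg_left _ (by positivity)
                exact Real.rpow_le_rpow (abs_nonneg _) hθb hγ0.le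
            _ = (N+2) * (2*π)^γ * ‖ξ‖^γ * ‖x‖^γ := by
                rw [Real.mul_rpow (by positivity) (by positivity),
                  Real.mul_rpow (norm_nonneg x) (norm_nonneg ξ)]
                ring
      _ = ENNReal.ofReal ((N+2) * (2*π)^γ * ‖ξ‖^γ) *
          ∫⁻ x, (‖M x‖₊ : ℝ≥0∞) * ENNReal.ofReal (‖x‖^γ) :=
          lintegral_const_mul' _ _ ENNReal.ofReal_ne_top
      _ ≤ ENNReal.ofReal ((N+2) * (2*π)^γ * ‖ξ‖^γ) *
          ENNReal.ofReal (A * r^(γ - (n:ℝ)*(1/p-1))) := mul_le_mul_right hWγ _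
      _ = ENNReal.ofReal ((N+2) * (2*π)^γ * A * (‖ξ‖^γ * r^(γ - (n:ℝ)*(1/p-1)))) := by
          rw [← ENNReal.ofReal_mul (by positivity)]
          congr 1
          ring
  -- Bound on the polynomial term
  set Sg : ℝ := ∑ α ∈ (Fintype.piFinset fun _ : Fin n => Finset.range (N + 1)) |>.filter
      (fun α => ∑ i, α i ≤ N),
      ‖ξ‖ ^ ((∑ i, (α i : ℝ))) * ‖∫ x, M x * ((∏ i, x i ^ α i : ℝ) : ℂ)‖ with hSg
  have hgnn : ∀ α ∈ (Fintype.piFinset fun _ : Fin n => Finset.range (N + 1)) |>.filter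
      (fun α => ∑ i, α i ≤ N), (0:ℝ) ≤
      ‖ξ‖ ^ ((∑ i, (α i : ℝ))) * ‖∫ x, M x * ((∏ i, x i ^ α i : ℝ) : ℂ)‖ :=
    fun α _ => mul_nonneg (Real.rpow_nonneg (norm_nonneg ξ) _) (norm_nonneg _)
  have hSg0 : 0 ≤ Sg := Finset.sum_nonneg hgnn
  have hbound2 : ‖∑ k ∈ Finset.range (N+1),
        ∑ f ∈ Fintype.piFinset (fun _ : Fin k => (Finset.univ : Finset (Fin n))),
          ((((-2)*π)^k / k.factorial : ℝ) : ℂ) * Complex.I^k * (∏ j, ((ξ (f j) : ℝ) : ℂ)) *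
            ∫ x, M x * ((∏ i, x i ^ (Finset.univ.filter (fun j => f j = i)).card : ℝ) : ℂ)‖
      ≤ (N+1) * (2*π)^N * ((n:ℝ)+1)^N * Sg := by
    calc ‖∑ k ∈ Finset.range (N+1),
        ∑ f ∈ Fintype.piFinset (fun _ : Fin k => (Finset.univ : Finset (Fin n))),
          ((((-2)*π)^k / k.factorial : ℝ) : ℂ) * Complex.I^k * (∏ j, ((ξ (f j) : ℝ) : ℂ)) *
            ∫ x, M x * ((∏ i, x i ^ (Finset.univ.filter (fun j => f j = i)).card : ℝ) : ℂ)‖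
        ≤ ∑ k ∈ Finset.range (N+1),
            ∑ f ∈ Fintype.piFinset (fun _ : Fin k => (Finset.univ : Finset (Fin n))),
            ‖((((-2)*π)^k / k.factorial : ℝ) : ℂ) * Complex.I^k * (∏ j, ((ξ (f j) : ℝ) : ℂ)) *
            ∫ x, M x * ((∏ i, x i ^ (Finset.univ.filter (fun j => f j = i)).card : ℝ) : ℂ)‖ :=
          (norm_sum_le _ _).trans (Finset.sum_le_sum fun k _ => norm_sum_le _ _)
      _ ≤ ∑ k ∈ Finset.range (N+1),
            ∑ _f ∈ Fintype.piFinset (fun _ : Fin k => (Finset.univ : Finset (Fin n))),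
            (2*π)^N * Sg := by
          apply Finset.sum_le_sum
          intro k hk
          apply Finset.sum_le_sum
          intro f _
          have hkN : k ≤ N := Nat.lt_succ_iff.mp (Finset.mem_range.mp hk)
          rw [norm_mul, norm_mul, norm_mul]
          have hc1 : ‖((((-2)*π)^k / k.factorial : ℝ) : ℂ)‖ ≤ (2*π)^k := by
            rw [Complex.norm_real, Real.norm_eq_abs, abs_div, abs_pow,
              show |(-2:ℝ)*π| = 2*π from by
                rw [abs_of_nonpos (by nlinarith [Real.pi_pos])]; ring]
            rw [Nat.abs_cast]
            apply div_le_of_le_mul₀ (by positivity) (by positivity) ?_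
            nlinarith [pow_nonneg (by positivity : (0:ℝ) ≤ 2*π) k,
                (by exact_mod_cast Nat.one_le_iff_ne_zero.2 k.factorial_ne_zero : (1:ℝ) ≤ k.factorial),
                pow_pos (by positivity : (0:ℝ) < 2*π) k]
          have hc2 : ‖Complex.I^k‖ = 1 := by rw [norm_pow, Complex.norm_I, one_pow]
          have hc3 : ‖∏ j, ((ξ (f j) : ℝ) : ℂ)‖ ≤ ‖ξ‖^k := by
            rw [norm_prod]
            calc ∏ j, ‖((ξ (f j) : ℝ):ℂ)‖ ≤ ∏ _j : Fin k, ‖ξ‖ :=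
                Finset.prod_le_prod (fun _ _ => norm_nonneg _) (fun j _ => by
                  rw [Complex.norm_real, Real.norm_eq_abs]; exact aux_coord n ξ (f j))
              _ = ‖ξ‖^k := by rw [Finset.prod_const, Finset.card_univ, Fintype.card_fin]
          have hmem : (fun i => (Finset.univ.filter (fun j => f j = i)).card) ∈
              Finset.filter (fun α => ∑ i, α i ≤ N)
                (Fintype.piFinset fun _ : Fin n => Finset.range (N + 1)) := by
            rw [Finset.mem_filter]
            constructor
            · rw [Fintype.mem_piFinset]
              intro i
              rw [Finset.mem_range, Nat.lt_succ_iff]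
              calc (Finset.univ.filter (fun j => f j = i)).card
                  ≤ (Finset.univ : Finset (Fin k)).card := Finset.card_filter_le _ _
                _ = k := by rw [Finset.card_univ, Fintype.card_fin]
                _ ≤ N := hkN
            · rw [aux_fiber_sum n k f]
              exact hkN
          have hsingle : ‖ξ‖ ^ ((∑ i, (((Finset.univ.filter (fun j => f j = i)).card : ℕ) : ℝ))) *
              ‖∫ x, M x * ((∏ i, x i ^ (Finset.univ.filter (fun j => f j = i)).card : ℝ) : ℂ)‖
              ≤ Sg := Finset.single_le_sum hgnn hmem
          have hcast : (∑ i, (((Finset.univ.filter (fun j => f j = i)).card : ℕ) : ℝ)) = (k:ℝ) := by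
            rw [← Nat.cast_sum, aux_fiber_sum n k f]
          rw [hcast, Real.rpow_natCast] at hsingle
          calc ‖((((-2)*π)^k / k.factorial : ℝ) : ℂ)‖ * ‖Complex.I^k‖ *
                ‖∏ j, ((ξ (f j) : ℝ) : ℂ)‖ *
                ‖∫ x, M x * ((∏ i, x i ^ (Finset.univ.filter (fun j => f j = i)).card : ℝ) : ℂ)‖
              ≤ (2*π)^k * 1 * ‖ξ‖^k *
                ‖∫ x, M x * ((∏ i, x i ^ (Finset.univ.filter (fun j => f j = i)).card : ℝ) : ℂ)‖ := by
                apply mul_le_mul_of_nonneg_right _ (norm_nonneg _)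
                rw [hc2]
                exact mul_le_mul (mul_le_mul hc1 le_rfl zero_le_one (by positivity)) hc3
                  (norm_nonneg _) (by positivity)
            _ ≤ (2*π)^N * ((‖ξ‖^k) *
                ‖∫ x, M x * ((∏ i, x i ^ (Finset.univ.filter (fun j => f j = i)).card : ℝ) : ℂ)‖) := by
                rw [mul_one, mul_assoc]
                apply mul_le_mul_of_nonneg_right _
                  (mul_nonneg (by positivity) (norm_nonneg _))
                exact pow_le_pow_right₀ hπ1 hkN
            _ ≤ (2*π)^N * Sg := mul_le_mul_of_nonneg_left hsingle (by positivity)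
      _ ≤ ∑ k ∈ Finset.range (N+1), ((n:ℝ)+1)^N * ((2*π)^N * Sg) := by
          apply Finset.sum_le_sum
          intro k hk
          have hkN : k ≤ N := Nat.lt_succ_iff.mp (Finset.mem_range.mp hk)
          rw [Finset.sum_const, nsmul_eq_mul]
          apply mul_le_mul_of_nonneg_right _ (mul_nonneg (by positivity) hSg0)
          have hcard : ((Fintype.piFinset (fun _ : Fin k =>
              (Finset.univ : Finset (Fin n)))).card : ℝ) = ((n:ℝ))^k := by
            rw [Fintype.card_piFinset]
            push_cast
            simp
          rw [hcard]
          calc ((n:ℝ))^k ≤ ((n:ℝ)+1)^k := pow_le_pow_left₀ (by positivity) (by linarith) k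
            _ ≤ ((n:ℝ)+1)^N := pow_le_pow_right₀ (by linarith) hkN
      _ = (N+1) * (2*π)^N * ((n:ℝ)+1)^N * Sg := by
          rw [Finset.sum_const, Finset.card_range, nsmul_eq_mul]
          push_cast
          ring
  -- final assembly
  rw [hdecomp, hPM_eq]
  calc ‖(∫ x, (Complex.exp (((θ x : ℝ):ℂ) * Complex.I) - Pf x) * M x) +
        ∑ k ∈ Finset.range (N+1),
        ∑ f ∈ Fintype.piFinset (fun _ : Fin k => (Finset.univ : Finset (Fin n))),
          ((((-2)*π)^k / k.factorial : ℝ) : ℂ) * Complex.I^k * (∏ j, ((ξ (f j) : ℝ) : ℂ)) *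
            ∫ x, M x * ((∏ i, x i ^ (Finset.univ.filter (fun j => f j = i)).card : ℝ) : ℂ)‖
      ≤ (N+2) * (2*π)^γ * A * (‖ξ‖^γ * r^(γ - (n:ℝ)*(1/p-1)))
        + (N+1) * (2*π)^N * ((n:ℝ)+1)^N * Sg :=
        (norm_add_le _ _).trans (add_le_add hbound1 hbound2)
    _ ≤ ((N+2) * (2*π)^γ * A + (N+1) * (2*π)^N * ((n:ℝ)+1)^N + 1) *
        (‖ξ‖ ^ γ * r ^ (γ - (n : ℝ) * (1 / p - 1)) + Sg) := by
        have hX0 : (0:ℝ) ≤ ‖ξ‖^γ * r^(γ - (n:ℝ)*(1/p-1)) :=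
          mul_nonneg (Real.rpow_nonneg (norm_nonneg ξ) _) (Real.rpow_nonneg hr.le _)
        have hC1 : (0:ℝ) ≤ (N+2) * (2*π)^γ * A := by positivity
        have hC2 : (0:ℝ) ≤ (N+1) * (2*π)^N * ((n:ℝ)+1)^N := by positivity
        nlinarith [mul_nonneg hC1 hSg0, mul_nonneg hC2 hX0, hX0, hSg0]
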